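/- arXiv:1908.04834 — 3 statements merged into one kernel-verified Lean document; each statement's English description precedes it below -/
import Mathlib

section
/- For a > 0 and 0 ≤ ω < a, if u : ℝ → ℝ is continuous with sup_y |u(y)| e^{ω|y|} =: M < ∞, then the convolution v(y) := ∫_{-∞}^{∞} -(1/(2a)) e^{-a|y-z|} u(z) dz satisfies |v(y)| e^{ω|y|} ≤ (1/(a^2 - ω^2)) M + (ω/(a(a^2 - ω^2))) M for all y; in particular v decays at the same exponential rate ω. -/
open MeasureTheory

lemma integral_exp_neg_mul_Ioi_zero {c : ℝ} (hc : 0 < c) :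
    ∫ x in Set.Ioi (0:ℝ), Real.exp (-(c * x)) = 1 / c := by
  have := integral_comp_mul_left_Ioi (fun t => Real.exp (-t)) 0 hc
  simp only [mul_zero] at this
  rw [this, integral_exp_neg_Ioi_zero, smul_eq_mul, mul_one, one_div]

lemma integrable_exp_neg_mul_abs' {c : ℝ} (hc : 0 < c) :
    Integrable (fun x : ℝ => Real.exp (-c * |x|)) := by
  have h1 : IntegrableOn (fun x : ℝ => Real.exp (-c * |x|)) (Set.Ioi 0) := by
    refine (exp_neg_integrableOn_Ioi 0 hc).congr_fun (fun x hx => ?_) measurableSet_Ioi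
    rw [abs_of_pos hx]
  have h2 : IntegrableOn (fun x : ℝ => Real.exp (-c * |x|)) (Set.Iic 0) := by
    rw [← Measure.map_neg_eq_self (volume : Measure ℝ)]
    have m : MeasurableEmbedding fun x : ℝ => -x := (Homeomorph.neg ℝ).measurableEmbedding
    rw [m.integrableOn_map_iff]
    simp_rw [Function.comp_def, abs_neg, Set.neg_preimage, Set.neg_Iic, neg_zero]
    exact Iff.mpr integrableOn_Ici_iff_integrableOn_Ioi h1
  have := h2.union h1
  rwa [Set.Iic_union_Ioi, integrableOn_univ] at this

lemma integral_exp_neg_mul_abs' {c : ℝ} (hc : 0 < c) :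
    ∫ x : ℝ, Real.exp (-c * |x|) = 2 / c := by
  rw [integral_comp_abs (f := fun t => Real.exp (-c * t))]
  simp_rw [neg_mul]
  rw [integral_exp_neg_mul_Ioi_zero hc]
  ring

/-- weighted bound for the Green's operator of `L_a u = u'' - a² u`:
if `|u(y)| e^{ω|y|} ≤ M` with `0 ≤ ω < a`, then the convolution
`v(y) = ∫ -(1/(2a)) e^{-a|y-z|} u(z) dz` satisfies
`|v(y)| e^{ω|y|} ≤ M/(a²-ω²) + ω M/(a(a²-ω²))`. -/
theorem green_weighted_bound (a ω M : ℝ) (ha : 0 < a) (hω0 : 0 ≤ ω) (hωa : ω < a)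
    (u : ℝ → ℝ) (hu : Continuous u)
    (hM : ∀ y, |u y| * Real.exp (ω * |y|) ≤ M) :
    ∀ y, |∫ z, (-(1 / (2 * a)) * Real.exp (-a * |y - z|)) * u z| * Real.exp (ω * |y|)
      ≤ (1 / (a ^ 2 - ω ^ 2)) * M + (ω / (a * (a ^ 2 - ω ^ 2))) * M := by
  intro y
  set c : ℝ := a - ω with hc_def
  have hc : 0 < c := sub_pos.mpr hωa
  have hM0 : 0 ≤ M := le_trans (by positivity) (hM 0)
  -- the dominating function
  set g : ℝ → ℝ := fun z => M / (2 * a) * Real.exp (-ω * |y|) * Real.exp (-c * |y - z|)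
    with hg_def
  have hg_int : Integrable g := by
    have : Integrable (fun z : ℝ => Real.exp (-c * |y - z|)) :=
      (integrable_exp_neg_mul_abs' hc).comp_sub_left y
    exact this.const_mul _
  -- pointwise bound
  have hpt : ∀ z : ℝ, ‖(-(1 / (2 * a)) * Real.exp (-a * |y - z|)) * u z‖ ≤ g z := by
    intro z
    have huz : |u z| ≤ M * Real.exp (-ω * |z|) := by
      have h1 := hM z
      have h2 : (0:ℝ) < Real.exp (ω * |z|) := Real.exp_pos _
      rw [← le_div_iff₀ h2] at h1
      rw [neg_mul, Real.exp_neg]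
      rw [div_eq_mul_inv] at h1
      exact h1
    have hexp : Real.exp (-a * |y - z|) * Real.exp (-ω * |z|)
        ≤ Real.exp (-c * |y - z|) * Real.exp (-ω * |y|) := by
      rw [← Real.exp_add, ← Real.exp_add]
      apply Real.exp_le_exp.mpr
      have htri : |y| ≤ |y - z| + |z| := by
        calc |y| = |(y - z) + z| := by ring_nf
        _ ≤ |y - z| + |z| := abs_add_le _ _
      nlinarith [abs_nonneg (y - z), abs_nonneg z, abs_nonneg y]
    have h2a : (0:ℝ) < 2 * a := by linarith
    calc ‖(-(1 / (2 * a)) * Real.exp (-a * |y - z|)) * u z‖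
        = 1 / (2 * a) * (Real.exp (-a * |y - z|) * |u z|) := by
          rw [Real.norm_eq_abs, abs_mul, abs_mul, abs_neg,
            abs_of_pos (by positivity : (0:ℝ) < 1 / (2 * a)),
            abs_of_pos (Real.exp_pos _), mul_assoc]
      _ ≤ 1 / (2 * a) * (Real.exp (-a * |y - z|) * (M * Real.exp (-ω * |z|))) := by
          apply mul_le_mul_of_nonneg_left _ (by positivity)
          exact mul_le_mul_of_nonneg_left huz (Real.exp_pos _).le
      _ = M / (2 * a) * (Real.exp (-a * |y - z|) * Real.exp (-ω * |z|)) := by ring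
      _ ≤ M / (2 * a) * (Real.exp (-c * |y - z|) * Real.exp (-ω * |y|)) := by
          apply mul_le_mul_of_nonneg_left hexp (by positivity)
      _ = g z := by rw [hg_def]; ring
  -- bound the integral
  have hbound : |∫ z, (-(1 / (2 * a)) * Real.exp (-a * |y - z|)) * u z| ≤ ∫ z, g z := by
    rw [← Real.norm_eq_abs]
    exact norm_integral_le_of_norm_le hg_int (Filter.Eventually.of_forall hpt)
  -- compute ∫ g
  have hg_val : ∫ z, g z = M / (2 * a) * Real.exp (-ω * |y|) * (2 / c) := by
    rw [hg_def]
    simp_rw [mul_assoc]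
    rw [integral_const_mul, integral_const_mul]
    congr 1
    congr 1
    have : ∫ z : ℝ, Real.exp (-c * |y - z|) = ∫ z : ℝ, Real.exp (-c * |z|) :=
      integral_sub_left_eq_self (fun t => Real.exp (-c * |t|)) volume y
    rw [this, integral_exp_neg_mul_abs' hc]
  have hkey : |∫ z, (-(1 / (2 * a)) * Real.exp (-a * |y - z|)) * u z| * Real.exp (ω * |y|)
      ≤ M / (a * c) := by
    calc |∫ z, (-(1 / (2 * a)) * Real.exp (-a * |y - z|)) * u z| * Real.exp (ω * |y|)
        ≤ (M / (2 * a) * Real.exp (-ω * |y|) * (2 / c)) * Real.exp (ω * |y|) := by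
          apply mul_le_mul_of_nonneg_right _ (Real.exp_pos _).le
          rw [← hg_val]; exact hbound
      _ = M / (a * c) * (Real.exp (-ω * |y|) * Real.exp (ω * |y|)) := by
          field_simp
      _ = M / (a * c) := by
          rw [← Real.exp_add, neg_mul, neg_add_cancel, Real.exp_zero, mul_one]
  have hrhs : (1 / (a ^ 2 - ω ^ 2)) * M + (ω / (a * (a ^ 2 - ω ^ 2))) * M = M / (a * c) := by
    have h1 : a ^ 2 - ω ^ 2 ≠ 0 := by nlinarith
    have h2 : a ≠ 0 := ne_of_gt ha
    have h3 : c ≠ 0 := ne_of_gt hc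
    field_simp [hc_def]
    ring
  rw [hrhs]
  exact hkey
end

section
/- Let X be a metric space, E, F Banach spaces, Ω ⊆ E open and convex, and Φ : Ω → F continuously differentiable with Lipschitz derivative (Φ ∈ C^{1,1}). Then for α ∈ (0,1], the composition operator C_Φ[f] := Φ ∘ f is continuous as a map from the set of bounded α-Hölder functions f : X → Ω (with values uniformly bounded away from the complement of Ω) into the space of bounded α-Hölder functions X → F, with respect to the C^{0,α}-norms. -/
open ENNReal Set

/-- The `C^{0,α}`-norm (sup-norm plus `α`-Hölder seminorm), valued in `ℝ≥0∞`. -/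
noncomputable def holderNorm {X E : Type*} [MetricSpace X] [NormedAddCommGroup E]
    (α : ℝ) (f : X → E) : ℝ≥0∞ :=
  (⨆ x, (‖f x‖₊ : ℝ≥0∞)) +
    ⨆ x, ⨆ y, ⨆ _ : x ≠ y, (‖f x - f y‖₊ : ℝ≥0∞) / edist x y ^ α

/-- Membership in `𝒪^{0,α}(X, Ω)`: `f` is bounded `α`-Hölder, takes values in `Ω`, and its
image is uniformly bounded away from the complement of `Ω`. -/
def memO {X E : Type*} [MetricSpace X] [NormedAddCommGroup E]
    (α : ℝ) (Ω : Set E) (f : X → E) : Prop :=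
  holderNorm α f < ⊤ ∧ (∀ x, f x ∈ Ω) ∧ ∃ ε > (0 : ℝ), ∀ x, ε ≤ Metric.infDist (f x) Ωᶜ

lemma key_est {E F : Type*} [NormedAddCommGroup E] [NormedSpace ℝ E]
    [NormedAddCommGroup F] [NormedSpace ℝ F]
    {Ω : Set E} (hΩc : Convex ℝ Ω)
    {Φ : E → F} {Φ' : E → E →L[ℝ] F} {L K : ℝ}
    (hd : ∀ x ∈ Ω, HasFDerivAt Φ (Φ' x) x)
    (hL : LipschitzOnWith (Real.toNNReal L) Φ' Ω)
    (hK : ∀ x ∈ Ω, ‖Φ' x‖ ≤ K)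
    {a a' b b' : E} (ha : a ∈ Ω) (ha' : a' ∈ Ω) (hb : b ∈ Ω) (hb' : b' ∈ Ω) :
    ‖(Φ a' - Φ a) - (Φ b' - Φ b)‖ ≤
      max L 0 * (‖a - b‖ + ‖a' - b'‖) * ‖a' - a‖ + K * ‖a' - a - (b' - b)‖ := by
  have hmem : ∀ t ∈ Icc (0:ℝ) 1, a + t • (a' - a) ∈ Ω := fun t ht =>
    hΩc.add_smul_sub_mem ha ha' ht
  have hmem' : ∀ t ∈ Icc (0:ℝ) 1, b + t • (b' - b) ∈ Ω := fun t ht =>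
    hΩc.add_smul_sub_mem hb hb' ht
  set ψ : ℝ → F := fun t => Φ (a + t • (a' - a)) - Φ (b + t • (b' - b)) with hψdef
  have hderiv : ∀ t ∈ Icc (0:ℝ) 1,
      HasDerivAt ψ (Φ' (a + t • (a' - a)) (a' - a) - Φ' (b + t • (b' - b)) (b' - b)) t := by
    intro t ht
    have h1 : HasDerivAt (fun t : ℝ => a + t • (a' - a)) (a' - a) t := by
      simpa using ((hasDerivAt_id t).smul_const (a' - a)).const_add a
    have h2 : HasDerivAt (fun t : ℝ => b + t • (b' - b)) (b' - b) t := by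
      simpa using ((hasDerivAt_id t).smul_const (b' - b)).const_add b
    have c1 := (hd _ (hmem t ht)).comp_hasDerivAt t h1
    have c2 := (hd _ (hmem' t ht)).comp_hasDerivAt t h2
    exact c1.sub c2
  have bound : ∀ t ∈ Ico (0:ℝ) 1,
      ‖Φ' (a + t • (a' - a)) (a' - a) - Φ' (b + t • (b' - b)) (b' - b)‖ ≤
        max L 0 * (‖a - b‖ + ‖a' - b'‖) * ‖a' - a‖ + K * ‖a' - a - (b' - b)‖ := by
    intro t ht
    have ht' : t ∈ Icc (0:ℝ) 1 := Ico_subset_Icc_self ht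
    set p := a + t • (a' - a)
    set q := b + t • (b' - b)
    have e : Φ' p (a' - a) - Φ' q (b' - b)
        = (Φ' p - Φ' q) (a' - a) + Φ' q (a' - a - (b' - b)) := by
      simp [ContinuousLinearMap.sub_apply, map_sub]; abel
    have hpq : ‖p - q‖ ≤ ‖a - b‖ + ‖a' - b'‖ := by
      have hpqe : p - q = (1 - t) • (a - b) + t • (a' - b') := by
        simp only [p, q]; module
      rw [hpqe]
      have h1 : ‖(1 - t) • (a - b)‖ = (1 - t) * ‖a - b‖ := by
        rw [norm_smul, Real.norm_eq_abs, abs_of_nonneg (by linarith [ht'.2])]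
      have h2 : ‖t • (a' - b')‖ = t * ‖a' - b'‖ := by
        rw [norm_smul, Real.norm_eq_abs, abs_of_nonneg ht'.1]
      calc ‖(1 - t) • (a - b) + t • (a' - b')‖
          ≤ ‖(1 - t) • (a - b)‖ + ‖t • (a' - b')‖ := norm_add_le _ _
        _ = (1 - t) * ‖a - b‖ + t * ‖a' - b'‖ := by rw [h1, h2]
        _ ≤ ‖a - b‖ + ‖a' - b'‖ := by
            have := norm_nonneg (a - b); have := norm_nonneg (a' - b')
            nlinarith [ht'.1, ht'.2]
    have hlip : ‖Φ' p - Φ' q‖ ≤ max L 0 * ‖p - q‖ := by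
      have := (lipschitzOnWith_iff_dist_le_mul.mp hL) p (hmem t ht') q (hmem' t ht')
      rw [dist_eq_norm, dist_eq_norm] at this
      simpa [Real.coe_toNNReal'] using this
    calc ‖Φ' p (a' - a) - Φ' q (b' - b)‖
        = ‖(Φ' p - Φ' q) (a' - a) + Φ' q (a' - a - (b' - b))‖ := by rw [e]
      _ ≤ ‖(Φ' p - Φ' q) (a' - a)‖ + ‖Φ' q (a' - a - (b' - b))‖ := norm_add_le _ _
      _ ≤ ‖Φ' p - Φ' q‖ * ‖a' - a‖ + ‖Φ' q‖ * ‖a' - a - (b' - b)‖ := by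
          gcongr <;> [exact ContinuousLinearMap.le_opNorm _ _;
            exact ContinuousLinearMap.le_opNorm _ _]
      _ ≤ max L 0 * (‖a - b‖ + ‖a' - b'‖) * ‖a' - a‖ + K * ‖a' - a - (b' - b)‖ := by
          have hK0 : (0:ℝ) ≤ K := (norm_nonneg _).trans (hK q (hmem' t ht'))
          have hb1 : ‖Φ' p - Φ' q‖ ≤ max L 0 * (‖a - b‖ + ‖a' - b'‖) :=
            hlip.trans (mul_le_mul_of_nonneg_left hpq (le_max_right _ _))
          gcongr <;> first | exact hb1 | exact hK q (hmem' t ht') | exact hK0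
  have main := norm_image_sub_le_of_norm_deriv_le_segment_01'
    (fun t ht => (hderiv t ht).hasDerivWithinAt) bound
  have e1 : ψ 1 = Φ a' - Φ b' := by simp [hψdef]
  have e0 : ψ 0 = Φ a - Φ b := by simp [hψdef]
  rw [e1, e0] at main
  have : (Φ a' - Φ a) - (Φ b' - Φ b) = (Φ a' - Φ b') - (Φ a - Φ b) := by abel
  rw [this]; exact main

lemma ofReal_norm_eq_coe_nnnorm {E : Type*} [SeminormedAddCommGroup E] (a : E) :
    ENNReal.ofReal ‖a‖ = (‖a‖₊ : ℝ≥0∞) :=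
  (ofReal_norm a).trans (enorm_eq_nnnorm a)

section helpers
variable {X E : Type*} [MetricSpace X] [NormedAddCommGroup E] {α : ℝ}

lemma sup_le_holderNorm (f : X → E) (x : X) : (‖f x‖₊ : ℝ≥0∞) ≤ holderNorm α f :=
  le_trans (le_iSup (fun x => (‖f x‖₊ : ℝ≥0∞)) x) le_self_add

lemma seminorm_le_holderNorm (f : X → E) {x y : X} (hxy : x ≠ y) :
    (‖f x - f y‖₊ : ℝ≥0∞) / edist x y ^ α ≤ holderNorm α f := by
  refine le_trans ?_ le_add_self
  exact le_iSup_of_le x (le_iSup_of_le y (le_iSup_of_le hxy le_rfl))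

lemma holderNorm_sub_bound (f g : X → E) :
    holderNorm α g ≤ holderNorm α f + holderNorm α (fun x => g x - f x) := by
  have hS : (⨆ x, (‖g x‖₊ : ℝ≥0∞)) ≤
      (⨆ x, (‖f x‖₊ : ℝ≥0∞)) + ⨆ x, (‖g x - f x‖₊ : ℝ≥0∞) := by
    refine iSup_le fun x => ?_
    have h1 : (‖g x‖₊ : ℝ≥0∞) ≤ (‖f x‖₊ : ℝ≥0∞) + ‖g x - f x‖₊ := by
      rw [← ofReal_norm_eq_coe_nnnorm, ← ofReal_norm_eq_coe_nnnorm, ← ofReal_norm_eq_coe_nnnorm,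
        ← ENNReal.ofReal_add (norm_nonneg _) (norm_nonneg _)]
      exact ENNReal.ofReal_le_ofReal (by simpa using norm_add_le (f x) (g x - f x))
    exact h1.trans (add_le_add (le_iSup (fun x => (‖f x‖₊ : ℝ≥0∞)) x)
      (le_iSup (fun x => (‖g x - f x‖₊ : ℝ≥0∞)) x))
  have hH : (⨆ x, ⨆ y, ⨆ _ : x ≠ y, (‖g x - g y‖₊ : ℝ≥0∞) / edist x y ^ α)
      ≤ (⨆ x, ⨆ y, ⨆ _ : x ≠ y, (‖f x - f y‖₊ : ℝ≥0∞) / edist x y ^ α)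
        + ⨆ x, ⨆ y, ⨆ _ : x ≠ y,
            (‖(fun x => g x - f x) x - (fun x => g x - f x) y‖₊ : ℝ≥0∞) / edist x y ^ α := by
    refine iSup_le fun x => iSup_le fun y => iSup_le fun hxy => ?_
    have h1 : (‖g x - g y‖₊ : ℝ≥0∞) ≤ (‖f x - f y‖₊ : ℝ≥0∞)
        + ‖(g x - f x) - (g y - f y)‖₊ := by
      rw [← ofReal_norm_eq_coe_nnnorm, ← ofReal_norm_eq_coe_nnnorm, ← ofReal_norm_eq_coe_nnnorm,
        ← ENNReal.ofReal_add (norm_nonneg _) (norm_nonneg _)]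
      refine ENNReal.ofReal_le_ofReal ?_
      have : g x - g y = (f x - f y) + ((g x - f x) - (g y - f y)) := by abel
      rw [this]; exact norm_add_le _ _
    calc (‖g x - g y‖₊ : ℝ≥0∞) / edist x y ^ α
        ≤ ((‖f x - f y‖₊ : ℝ≥0∞) + ‖(g x - f x) - (g y - f y)‖₊) / edist x y ^ α :=
          ENNReal.div_le_div_right h1 _
      _ = (‖f x - f y‖₊ : ℝ≥0∞) / edist x y ^ α
          + (‖(g x - f x) - (g y - f y)‖₊ : ℝ≥0∞) / edist x y ^ α := by
          simp [div_eq_mul_inv, add_mul]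
      _ ≤ _ := by
          refine add_le_add ?_ ?_ <;>
            exact le_iSup_of_le x (le_iSup_of_le y (le_iSup_of_le hxy le_rfl))
  calc holderNorm α g ≤ (((⨆ x, (‖f x‖₊ : ℝ≥0∞)) + ⨆ x, (‖g x - f x‖₊ : ℝ≥0∞)))
        + ((⨆ x, ⨆ y, ⨆ _ : x ≠ y, (‖f x - f y‖₊ : ℝ≥0∞) / edist x y ^ α)
          + ⨆ x, ⨆ y, ⨆ _ : x ≠ y,
              (‖(fun x => g x - f x) x - (fun x => g x - f x) y‖₊ : ℝ≥0∞) / edist x y ^ α) :=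
        add_le_add hS hH
    _ = _ := by rw [holderNorm, holderNorm]; ring

end helpers

/-- if `Φ ∈ C^{1,1}(Ω, F)` (differentiable on the open convex set `Ω` with
bounded Lipschitz derivative), then the composition operator `C_Φ[f] := Φ ∘ f` is continuous
from `𝒪^{0,α}(X, Ω)` into `C^{0,α}(X, F)` with respect to the `C^{0,α}`-norms. -/
theorem composition_continuous {X E F : Type*} [MetricSpace X]
    [NormedAddCommGroup E] [NormedSpace ℝ E] [CompleteSpace E]
    [NormedAddCommGroup F] [NormedSpace ℝ F] [CompleteSpace F]
    (α : ℝ) (hα0 : 0 < α) (hα1 : α ≤ 1)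
    (Ω : Set E) (hΩo : IsOpen Ω) (hΩc : Convex ℝ Ω)
    (Φ : E → F) (Φ' : E → E →L[ℝ] F) (L K : ℝ)
    (hd : ∀ x ∈ Ω, HasFDerivAt Φ (Φ' x) x)
    (hL : LipschitzOnWith (Real.toNNReal L) Φ' Ω)
    (hK : ∀ x ∈ Ω, ‖Φ' x‖ ≤ K) :
    ∀ f : X → E, memO α Ω f →
      ∀ ε : ℝ≥0∞, 0 < ε → ∃ δ : ℝ≥0∞, 0 < δ ∧
        ∀ g : X → E, memO α Ω g → holderNorm α (fun x => g x - f x) < δ →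
          holderNorm α (fun x => Φ (g x) - Φ (f x)) < ε := by
  intro f hf ε hε
  obtain ⟨hfN, hfΩ, -⟩ := hf
  set Mf := holderNorm α f with hMf
  set Lp : ℝ≥0∞ := ENNReal.ofReal (max L 0) with hLp
  set Kp : ℝ≥0∞ := ENNReal.ofReal K with hKp
  set C : ℝ≥0∞ := 2 * Kp + Lp * (2 * Mf + 1) + 1 with hC
  have hCtop : C ≠ ⊤ := by
    rw [hC]
    refine ENNReal.add_ne_top.2 ⟨ENNReal.add_ne_top.2 ⟨?_, ?_⟩, ENNReal.one_ne_top⟩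
    · exact ENNReal.mul_ne_top (by simp) ENNReal.ofReal_ne_top
    · exact ENNReal.mul_ne_top ENNReal.ofReal_ne_top
        (ENNReal.add_ne_top.2 ⟨ENNReal.mul_ne_top (by simp) hfN.ne, ENNReal.one_ne_top⟩)
  have hC0 : C ≠ 0 := (lt_of_lt_of_le one_pos le_add_self).ne'
  refine ⟨min 1 (ε / C), lt_min one_pos (ENNReal.div_pos hε.ne' hCtop), ?_⟩
  intro g hg hsmall
  obtain ⟨hgN, hgΩ, -⟩ := hg
  set δ' := holderNorm α (fun x => g x - f x) with hδ'def
  have hδ'1 : δ' ≤ 1 := (hsmall.le).trans (min_le_left _ _)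
  have hMg : holderNorm α g ≤ Mf + 1 :=
    (holderNorm_sub_bound f g).trans (add_le_add_right hδ'1 _)
  -- sup-part bound
  have hSb : (⨆ x, (‖Φ (g x) - Φ (f x)‖₊ : ℝ≥0∞)) ≤ Kp * δ' := by
    refine iSup_le fun x => ?_
    have hK0x : (0:ℝ) ≤ K := (norm_nonneg (Φ' (f x))).trans (hK _ (hfΩ x))
    have hreal : ‖Φ (g x) - Φ (f x)‖ ≤ K * ‖g x - f x‖ :=
      Convex.norm_image_sub_le_of_norm_hasFDerivWithin_le
        (fun z hz => (hd z hz).hasFDerivWithinAt) hK hΩc (hfΩ x) (hgΩ x)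
    have h1 : (‖Φ (g x) - Φ (f x)‖₊ : ℝ≥0∞) ≤ Kp * ‖g x - f x‖₊ := by
      rw [hKp, ← ofReal_norm_eq_coe_nnnorm, ← ofReal_norm_eq_coe_nnnorm,
        ← ENNReal.ofReal_mul hK0x]
      exact ENNReal.ofReal_le_ofReal hreal
    exact h1.trans (mul_le_mul_right (sup_le_holderNorm (fun x => g x - f x) x) _)
  -- seminorm-part bound
  have hHb : (⨆ x, ⨆ y, ⨆ _ : x ≠ y,
      (‖(Φ (g x) - Φ (f x)) - (Φ (g y) - Φ (f y))‖₊ : ℝ≥0∞) / edist x y ^ α)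
      ≤ (Lp * (Mf + (Mf + 1)) + Kp) * δ' := by
    refine iSup_le fun x => iSup_le fun y => iSup_le fun hxy => ?_
    have hK0x : (0:ℝ) ≤ K := (norm_nonneg (Φ' (f x))).trans (hK _ (hfΩ x))
    have hreal := key_est hΩc hd hL hK (hfΩ x) (hgΩ x) (hfΩ y) (hgΩ y)
    have hN : (‖(Φ (g x) - Φ (f x)) - (Φ (g y) - Φ (f y))‖₊ : ℝ≥0∞) ≤
        Lp * ((‖f x - f y‖₊ : ℝ≥0∞) + ‖g x - g y‖₊) * ‖g x - f x‖₊
          + Kp * ‖g x - f x - (g y - f y)‖₊ := by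
      have e1 : Lp * ((‖f x - f y‖₊ : ℝ≥0∞) + ‖g x - g y‖₊) * ‖g x - f x‖₊
            + Kp * ‖g x - f x - (g y - f y)‖₊
          = ENNReal.ofReal (max L 0 * (‖f x - f y‖ + ‖g x - g y‖) * ‖g x - f x‖
            + K * ‖g x - f x - (g y - f y)‖) := by
        rw [ENNReal.ofReal_add (by positivity) (mul_nonneg hK0x (norm_nonneg _)),
          ENNReal.ofReal_mul (by positivity), ENNReal.ofReal_mul (le_max_right L 0),
          ENNReal.ofReal_mul hK0x, ENNReal.ofReal_add (norm_nonneg _) (norm_nonneg _),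
          ofReal_norm_eq_coe_nnnorm, ofReal_norm_eq_coe_nnnorm,
          ofReal_norm_eq_coe_nnnorm, ofReal_norm_eq_coe_nnnorm, hLp, hKp]
      rw [e1, ← ofReal_norm_eq_coe_nnnorm]
      exact ENNReal.ofReal_le_ofReal hreal
    calc (‖(Φ (g x) - Φ (f x)) - (Φ (g y) - Φ (f y))‖₊ : ℝ≥0∞) / edist x y ^ α
        ≤ (Lp * ((‖f x - f y‖₊ : ℝ≥0∞) + ‖g x - g y‖₊) * ‖g x - f x‖₊
            + Kp * ‖g x - f x - (g y - f y)‖₊) / edist x y ^ α :=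
          ENNReal.div_le_div_right hN _
      _ = Lp * ((‖f x - f y‖₊ : ℝ≥0∞) / edist x y ^ α
            + (‖g x - g y‖₊ : ℝ≥0∞) / edist x y ^ α) * ‖g x - f x‖₊
          + Kp * ((‖g x - f x - (g y - f y)‖₊ : ℝ≥0∞) / edist x y ^ α) := by
          simp only [div_eq_mul_inv]; ring
      _ ≤ Lp * (Mf + (Mf + 1)) * δ' + Kp * δ' := by
          gcongr
          · exact seminorm_le_holderNorm f hxy
          · exact (seminorm_le_holderNorm g hxy).trans hMg
          · exact sup_le_holderNorm (fun x => g x - f x) x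
          · exact seminorm_le_holderNorm (fun x => g x - f x) hxy
      _ = (Lp * (Mf + (Mf + 1)) + Kp) * δ' := by ring
  have htotal : holderNorm α (fun x => Φ (g x) - Φ (f x))
      ≤ (Kp + (Lp * (Mf + (Mf + 1)) + Kp)) * δ' := by
    rw [holderNorm, add_mul]
    exact add_le_add hSb hHb
  have hCle : Kp + (Lp * (Mf + (Mf + 1)) + Kp) ≤ C := by
    rw [hC]
    have : Kp + (Lp * (Mf + (Mf + 1)) + Kp) = 2 * Kp + Lp * (2 * Mf + 1) := by ring
    rw [this]; exact le_self_add
  calc holderNorm α (fun x => Φ (g x) - Φ (f x)) ≤ C * δ' :=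
        htotal.trans (mul_le_mul_left hCle _)
    _ < C * min 1 (ε / C) := (ENNReal.mul_lt_mul_iff_right hC0 hCtop).mpr hsmall
    _ ≤ C * (ε / C) := mul_le_mul_right (min_le_right _ _) _
    _ ≤ ε := ENNReal.mul_div_le
end

section
/- For k ∈ (0,1) and a smooth function u(x,y), suppose the immersion Φ[u] (as defined via the Darboux coordinates of the upper half-space model) has extrinsic curvature K[u] = S² + (1/(u_{xx}+u))(SC + T(u_{xy}+u_x)² - T(u_{xx}+u)(u_{yy}+u_y) - (u_{yy}+u_y)), where T := u + u_y, C := 1/√(1+T²), S := T/√(1+T²). Then the equation K[u] = k is equivalent to k u_{xx} + u_{yy} - (1-k) u = F(u, Du, D²u), where F is a real-analytic function of its arguments vanishing together with its first derivatives at (0,0,0). -/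
/-- The extrinsic curvature `K[u]` of the immersion `Φ[u]`, as a function of the point
values `p = (u, u_x, u_y, u_xx, u_xy, u_yy)`: with `T = u + u_y`, `C = 1/√(1+T²)`,
`S = T/√(1+T²)`,
`K = S² + (1/(u_xx+u)) (SC + T(u_xy+u_x)² - T(u_xx+u)(u_yy+u_y) - (u_yy+u_y))`. -/
noncomputable def extCurv (p : ℝ × ℝ × ℝ × ℝ × ℝ × ℝ) : ℝ :=
  let u := p.1; let ux := p.2.1; let uy := p.2.2.1
  let uxx := p.2.2.2.1; let uxy := p.2.2.2.2.1; let uyy := p.2.2.2.2.2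
  let T := u + uy
  let C := 1 / Real.sqrt (1 + T ^ 2)
  let S := T / Real.sqrt (1 + T ^ 2)
  S ^ 2 + (1 / (uxx + u)) *
    (S * C + T * (uxy + ux) ^ 2 - T * (uxx + u) * (uyy + uy) - (uyy + uy))

/-- `T = u + u_y` as a function of the jet. -/
def Tfun (p : ℝ × ℝ × ℝ × ℝ × ℝ × ℝ) : ℝ := p.1 + p.2.2.1

/-- The cofactor `H` so that the nonlinearity is `F = T·H`. -/
def Hfun (k : ℝ) (p : ℝ × ℝ × ℝ × ℝ × ℝ × ℝ) : ℝ :=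
  (1 - k) * (p.2.2.2.1 + p.1) * (p.1 + p.2.2.1)
    + (1 + (p.1 + p.2.2.1) ^ 2) * (p.2.2.2.2.1 + p.2.1) ^ 2
    - (1 + (p.1 + p.2.2.1) ^ 2) * (p.2.2.2.1 + p.1) * (p.2.2.2.2.2 + p.2.2.1)
    - (p.1 + p.2.2.1) * (p.2.2.2.2.2 + p.2.2.1)

lemma analyticAt_Tfun (p : ℝ × ℝ × ℝ × ℝ × ℝ × ℝ) : AnalyticAt ℝ Tfun p := by
  have h1 : AnalyticAt ℝ (fun q : ℝ × ℝ × ℝ × ℝ × ℝ × ℝ => q.1) p := analyticAt_fst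
  have h3 : AnalyticAt ℝ (fun q : ℝ × ℝ × ℝ × ℝ × ℝ × ℝ => q.2.2.1) p :=
    analyticAt_fst.comp (analyticAt_snd.comp analyticAt_snd)
  exact h1.add h3

lemma analyticAt_Hfun (k : ℝ) (p : ℝ × ℝ × ℝ × ℝ × ℝ × ℝ) : AnalyticAt ℝ (Hfun k) p := by
  have h1 : AnalyticAt ℝ (fun q : ℝ × ℝ × ℝ × ℝ × ℝ × ℝ => q.1) p := analyticAt_fst
  have h2 : AnalyticAt ℝ (fun q : ℝ × ℝ × ℝ × ℝ × ℝ × ℝ => q.2.1) p :=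
    analyticAt_fst.comp analyticAt_snd
  have h3 : AnalyticAt ℝ (fun q : ℝ × ℝ × ℝ × ℝ × ℝ × ℝ => q.2.2.1) p :=
    analyticAt_fst.comp (analyticAt_snd.comp analyticAt_snd)
  have h4 : AnalyticAt ℝ (fun q : ℝ × ℝ × ℝ × ℝ × ℝ × ℝ => q.2.2.2.1) p :=
    analyticAt_fst.comp (analyticAt_snd.comp (analyticAt_snd.comp analyticAt_snd))
  have h5 : AnalyticAt ℝ (fun q : ℝ × ℝ × ℝ × ℝ × ℝ × ℝ => q.2.2.2.2.1) p :=
    analyticAt_fst.comp (analyticAt_snd.comp (analyticAt_snd.comp (analyticAt_snd.comp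
      analyticAt_snd)))
  have h6 : AnalyticAt ℝ (fun q : ℝ × ℝ × ℝ × ℝ × ℝ × ℝ => q.2.2.2.2.2) p :=
    analyticAt_snd.comp (analyticAt_snd.comp (analyticAt_snd.comp (analyticAt_snd.comp
      analyticAt_snd)))
  exact (((((analyticAt_const.mul (h4.add h1)).mul (h1.add h3)).add
    (((analyticAt_const.add ((h1.add h3).pow 2)).mul ((h5.add h2).pow 2)))).sub
    (((analyticAt_const.add ((h1.add h3).pow 2)).mul (h4.add h1)).mul (h6.add h3))).sub
    ((h1.add h3).mul (h6.add h3)))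

/-- for `k ∈ (0,1)`, the constant extrinsic curvature equation `K[u] = k`
is equivalent, near `0` (where `u_xx + u ≠ 0`), to the quasilinear equation
`k u_xx + u_yy - (1-k) u = F(u, Du, D²u)`, where `F` is real-analytic near `0` and
vanishes together with its first derivatives at `(0,0,0)`. -/
theorem gauss_curvature_equation_quasilinear (k : ℝ) (hk0 : 0 < k) (hk1 : k < 1) :
    ∃ F : (ℝ × ℝ × ℝ × ℝ × ℝ × ℝ) → ℝ,
      AnalyticAt ℝ F 0 ∧ F 0 = 0 ∧ fderiv ℝ F 0 = 0 ∧
      ∃ W ∈ nhds (0 : ℝ × ℝ × ℝ × ℝ × ℝ × ℝ),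
        (∀ p ∈ W, AnalyticAt ℝ F p) ∧
        ∀ p ∈ W, p.2.2.2.1 + p.1 ≠ 0 →
          (extCurv p = k ↔
            k * p.2.2.2.1 + p.2.2.2.2.2 - (1 - k) * p.1 = F p) := by
  refine ⟨fun p => Tfun p * Hfun k p, (analyticAt_Tfun 0).mul (analyticAt_Hfun k 0),
    by simp [Tfun], ?_, Set.univ, Filter.univ_mem,
    fun p _ => (analyticAt_Tfun p).mul (analyticAt_Hfun k p), ?_⟩
  · rw [fderiv_fun_mul ((analyticAt_Tfun 0).differentiableAt)
      ((analyticAt_Hfun k 0).differentiableAt)]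
    have hT : Tfun (0 : ℝ × ℝ × ℝ × ℝ × ℝ × ℝ) = 0 := by simp [Tfun]
    have hH : Hfun k (0 : ℝ × ℝ × ℝ × ℝ × ℝ × ℝ) = 0 := by simp [Hfun]
    rw [hT, hH]; simp
  · rintro ⟨a, b, c, d, e, f⟩ - hne
    simp only at hne
    have hs2 : Real.sqrt (1 + (a + c) ^ 2) ^ 2 = 1 + (a + c) ^ 2 :=
      Real.sq_sqrt (by positivity)
    have hs0 : Real.sqrt (1 + (a + c) ^ 2) ≠ 0 := by positivity
    have hden : (d + a) * (1 + (a + c) ^ 2) ≠ 0 := mul_ne_zero hne (by positivity)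
    have hT2 : (1 : ℝ) + (a + c) ^ 2 ≠ 0 := by positivity
    have e1 : ((a + c) / Real.sqrt (1 + (a + c) ^ 2)) ^ 2
        = (a + c) ^ 2 / (1 + (a + c) ^ 2) := by rw [div_pow, hs2]
    have e2 : (a + c) / Real.sqrt (1 + (a + c) ^ 2) * (1 / Real.sqrt (1 + (a + c) ^ 2))
        = (a + c) / (1 + (a + c) ^ 2) := by
      rw [div_mul_div_comm, mul_one, ← sq, hs2]
    have key : extCurv (a, b, c, d, e, f) - k =
        (Tfun (a, b, c, d, e, f) * Hfun k (a, b, c, d, e, f)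
          - (k * d + f - (1 - k) * a)) / ((d + a) * (1 + (a + c) ^ 2)) := by
      simp only [extCurv, Tfun, Hfun]
      rw [e1, e2]
      field_simp
      ring
    have hiff : extCurv (a, b, c, d, e, f) = k ↔
        Tfun (a, b, c, d, e, f) * Hfun k (a, b, c, d, e, f)
          - (k * d + f - (1 - k) * a) = 0 := by
      rw [← sub_eq_zero, key, div_eq_zero_iff]
      simp [hden]
    rw [hiff, sub_eq_zero]
    exact eq_comm
end
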